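/- Let φ ∈ (0,1), ω = e^{2πiφ}, α ∈ ℂ with α ≠ 0, β = −iα, and let λ ∈ ℂ satisfy λ² = ω[(1−2ω+ω²) + i(1−ω+ω²)]/(1−2ω+2ω²). Then ω²(α+β)²/(2λ²(ωα + (ω−1)β)²) = ω/(ω²−3ω+1+i(ω²−1)), where all appearing denominators are nonzero. -/

import Mathlib

theorem wojcik_theta_sq_beta_eq_neg_i_alpha
    (φ : ℝ) (hφ : φ ∈ Set.Ioo (0 : ℝ) 1) (ω α β lam : ℂ)
    (hω : ω = Complex.exp (2 * (Real.pi : ℂ) * Complex.I * (φ : ℂ)))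
    (hα : α ≠ 0) (hβ : β = -Complex.I * α)
    (hlam : lam ^ 2 =
      ω * ((1 - 2 * ω + ω ^ 2) + Complex.I * (1 - ω + ω ^ 2)) / (1 - 2 * ω + 2 * ω ^ 2)) :
    2 * lam ^ 2 * (ω * α + (ω - 1) * β) ^ 2 ≠ 0 ∧
    ω ^ 2 - 3 * ω + 1 + Complex.I * (ω ^ 2 - 1) ≠ 0 ∧
    ω ^ 2 * (α + β) ^ 2 / (2 * lam ^ 2 * (ω * α + (ω - 1) * β) ^ 2) =
      ω / (ω ^ 2 - 3 * ω + 1 + Complex.I * (ω ^ 2 - 1)) := by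
  have habs : ‖ω‖ = 1 := by
    rw [hω, Complex.norm_exp]
    simp
  have hns : Complex.normSq ω = 1 := by
    have h := Complex.sq_norm ω
    rw [habs] at h
    simpa using h.symm
  have hne : ∀ c : ℂ, Complex.normSq c ≠ 1 → ω ≠ c := by
    intro c hc h
    exact hc (h ▸ hns)
  have h1 : ω ≠ (1 + Complex.I) / 2 := by
    apply hne; simp [Complex.normSq_apply, Complex.div_re, Complex.div_im]; try norm_num
  have h2 : ω ≠ (1 - Complex.I) / 2 := by
    apply hne; simp [Complex.normSq_apply, Complex.div_re, Complex.div_im]; try norm_num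
  have h3 : ω ≠ 1 - Complex.I := by
    apply hne; simp [Complex.normSq_apply]; try norm_num
  have hω0 : ω ≠ 0 := by
    rw [hω]; exact Complex.exp_ne_zero _
  have hD : (1 - 2 * ω + 2 * ω ^ 2) ≠ 0 := by
    intro h
    have hfac : 2 * (ω - (1 + Complex.I) / 2) * (ω - (1 - Complex.I) / 2) = 0 := by
      linear_combination h - Complex.I_sq / 2
    rcases mul_eq_zero.mp hfac with h' | h'
    · rcases mul_eq_zero.mp h' with h'' | h''
      · norm_num at h''
      · exact h1 (by linear_combination h'')
    · exact h2 (by linear_combination h')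
  have hN : ((1 - 2 * ω + ω ^ 2) + Complex.I * (1 - ω + ω ^ 2)) ≠ 0 := by
    intro h
    have hfac : (1 + Complex.I) * (ω - (1 - Complex.I)) * (ω - (1 + Complex.I) / 2) = 0 := by
      linear_combination h + (ω - (1 + Complex.I)) / 2 * Complex.I_sq
    rcases mul_eq_zero.mp hfac with h' | h'
    · rcases mul_eq_zero.mp h' with h'' | h''
      · have hI : Complex.I = -1 := by linear_combination h''
        simp [Complex.ext_iff] at hI
      · exact h3 (by linear_combination h'')
    · exact h1 (by linear_combination h')
  have hM : ω ^ 2 - 3 * ω + 1 + Complex.I * (ω ^ 2 - 1) ≠ 0 := by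
    intro h
    have hfac : (1 + Complex.I) * (ω - (1 - Complex.I)) * (ω - (1 - Complex.I) / 2) = 0 := by
      linear_combination h + (3 * ω + Complex.I - 1) / 2 * Complex.I_sq
    rcases mul_eq_zero.mp hfac with h' | h'
    · rcases mul_eq_zero.mp h' with h'' | h''
      · have hI : Complex.I = -1 := by linear_combination h''
        simp [Complex.ext_iff] at hI
      · exact h3 (by linear_combination h'')
    · exact h2 (by linear_combination h')
  have hA : ω * α + (ω - 1) * β ≠ 0 := by
    rw [hβ]
    intro h
    have hfac : α * ((1 - Complex.I) * (ω - (1 - Complex.I) / 2)) = 0 := by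
      linear_combination h - α / 2 * Complex.I_sq
    rcases mul_eq_zero.mp hfac with h' | h'
    · exact hα h'
    · rcases mul_eq_zero.mp h' with h'' | h''
      · have hI : Complex.I = 1 := by linear_combination -h''
        simp [Complex.ext_iff] at hI
      · exact h2 (by linear_combination h'')
  have hlam0 : lam ^ 2 ≠ 0 := by
    rw [hlam]
    exact div_ne_zero (mul_ne_zero hω0 hN) hD
  have hden : 2 * lam ^ 2 * (ω * α + (ω - 1) * β) ^ 2 ≠ 0 :=
    mul_ne_zero (mul_ne_zero two_ne_zero hlam0) (pow_ne_zero 2 hA)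
  refine ⟨hden, hM, ?_⟩
  rw [div_eq_div_iff hden hM, hlam, hβ]
  field_simp
  rw [eq_div_iff (by intro h; exact hD (by linear_combination h))]
  linear_combination (((-4 : ℂ) * ω ^ 3 + 7 * ω ^ 2 - 5 * ω + 1)
      + Complex.I * ((4 : ℂ) * ω ^ 3 - 9 * ω ^ 2 + 8 * ω - 3))
      * Complex.I_sq
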